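/- For m = 3, the operator (1/2) Id − T, where T = (1/6)(R − R²) on X³ and R is the circular right shift, has operator norm 1/√3; equivalently the eigenvalues of ((1/2) Id − T)*((1/2) Id − T), represented as the 3×3 matrix acting blockwise, are 1/3 (with multiplicity two) and 1/4. -/

import Mathlib

open scoped RealInnerProductSpace

lemma expand3aux {X : Type*} [NormedAddCommGroup X] [InnerProductSpace ℝ X]
    (r s t : ℝ) (a b c : X) :
    ‖r • a + s • b + t • c‖ ^ 2 = r^2*‖a‖^2 + s^2*‖b‖^2 + t^2*‖c‖^2
      + 2*r*s*⟪a,b⟫ + 2*r*t*⟪a,c⟫ + 2*s*t*⟪b,c⟫ := by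
  simp only [← real_inner_self_eq_norm_sq, inner_add_left, inner_add_right,
    real_inner_smul_left, real_inner_smul_right]
  rw [real_inner_comm b a, real_inner_comm c a, real_inner_comm c b]; ring

theorem stmt17 {X : Type*} [NormedAddCommGroup X] [InnerProductSpace ℝ X] [CompleteSpace X]
    [Nontrivial X]
    (R : PiLp 2 (fun _ : Fin 3 => X) →L[ℝ] PiLp 2 (fun _ : Fin 3 => X))
    (hR : ∀ (x : PiLp 2 (fun _ : Fin 3 => X)) (i : Fin 3), R x i = x (i - 1))
    (T : PiLp 2 (fun _ : Fin 3 => X) →L[ℝ] PiLp 2 (fun _ : Fin 3 => X))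
    (hT : T = (6 : ℝ)⁻¹ • (R - R ^ 2)) :
    ‖(1 / 2 : ℝ) • (1 : PiLp 2 (fun _ : Fin 3 => X) →L[ℝ] PiLp 2 (fun _ : Fin 3 => X)) - T‖
      = (Real.sqrt 3)⁻¹ := by
  set S := (1 / 2 : ℝ) • (1 : PiLp 2 (fun _ : Fin 3 => X) →L[ℝ] PiLp 2 (fun _ : Fin 3 => X)) - T
    with hS
  have hsqrt3 : (Real.sqrt 3) ^ 2 = 3 := Real.sq_sqrt (by norm_num)
  have hsqrt3pos : 0 < Real.sqrt 3 := Real.sqrt_pos.mpr (by norm_num)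
  have hSapp : ∀ (x : PiLp 2 (fun _ : Fin 3 => X)) (i : Fin 3),
      S x i = (1/2 : ℝ) • x i + (6:ℝ)⁻¹ • x (i - 2) + (-(6:ℝ)⁻¹) • x (i - 1) := by
    intro x i
    have h2 : (R ^ 2) x i = x (i - 1 - 1) := by
      rw [pow_two, ContinuousLinearMap.mul_apply, hR, hR]
    simp only [hS, hT, ContinuousLinearMap.sub_apply, ContinuousLinearMap.smul_apply,
      ContinuousLinearMap.one_apply, PiLp.sub_apply, PiLp.smul_apply, hR, h2]
    have : i - 1 - 1 = i - 2 := by fin_cases i <;> rfl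
    rw [this]
    module
  -- key identity: ‖S x‖² = (1/3)‖x‖² − (1/36)‖x 0 + x 1 + x 2‖²
  have key : ∀ x : PiLp 2 (fun _ : Fin 3 => X),
      ‖S x‖ ^ 2 = (1/3) * ‖x‖ ^ 2 - (1/36) * ‖x 0 + x 1 + x 2‖ ^ 2 := by
    intro x
    have h0 := hSapp x 0
    have h1 := hSapp x 1
    have h2 := hSapp x 2
    norm_num at h0 h1 h2
    rw [PiLp.norm_sq_eq_of_L2, PiLp.norm_sq_eq_of_L2, Fin.sum_univ_three, Fin.sum_univ_three,
      h0, h1, h2]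
    have e0 := expand3aux (1/2 : ℝ) ((6:ℝ)⁻¹) (-(6:ℝ)⁻¹) (x 0) (x 1) (x 2)
    have e1 := expand3aux (1/2 : ℝ) ((6:ℝ)⁻¹) (-(6:ℝ)⁻¹) (x 1) (x 2) (x 0)
    have e2 := expand3aux (1/2 : ℝ) ((6:ℝ)⁻¹) (-(6:ℝ)⁻¹) (x 2) (x 0) (x 1)
    have es := expand3aux (1 : ℝ) (1 : ℝ) (1 : ℝ) (x 0) (x 1) (x 2)
    norm_num at e0 e1 e2 es ⊢
    simp only [Fin.reduceSub]
    rw [e0, e1, e2, es, real_inner_comm (x 1) (x 0), real_inner_comm (x 2) (x 0),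
      real_inner_comm (x 2) (x 1)]
    ring
  have hub : ‖S‖ ≤ (Real.sqrt 3)⁻¹ := by
    apply ContinuousLinearMap.opNorm_le_bound _ (by positivity)
    intro x
    have hk := key x
    have h1 : ‖S x‖ ^ 2 ≤ ((Real.sqrt 3)⁻¹ * ‖x‖) ^ 2 := by
      rw [mul_pow, inv_pow, hsqrt3]
      nlinarith [sq_nonneg ‖x 0 + x 1 + x 2‖]
    calc ‖S x‖ = Real.sqrt (‖S x‖ ^ 2) := (Real.sqrt_sq (norm_nonneg _)).symm
      _ ≤ Real.sqrt (((Real.sqrt 3)⁻¹ * ‖x‖) ^ 2) := Real.sqrt_le_sqrt h1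
      _ = (Real.sqrt 3)⁻¹ * ‖x‖ := Real.sqrt_sq (by positivity)
  have hlb : (Real.sqrt 3)⁻¹ ≤ ‖S‖ := by
    obtain ⟨v, hv⟩ := exists_ne (0 : X)
    set x₀ : PiLp 2 (fun _ : Fin 3 => X) := (WithLp.equiv 2 _).symm ![v, -v, 0] with hx₀
    have hx0 : x₀ 0 = v := rfl
    have hx1 : x₀ 1 = -v := rfl
    have hx2 : x₀ 2 = (0 : X) := rfl
    have hnx : ‖x₀‖ ^ 2 = 2 * ‖v‖ ^ 2 := by
      rw [PiLp.norm_sq_eq_of_L2, Fin.sum_univ_three, hx0, hx1, hx2]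
      simp
      ring
    have hkx := key x₀
    rw [hx0, hx1, hx2, hnx] at hkx
    have hS2 : ‖S x₀‖ ^ 2 = 2 / 3 * ‖v‖ ^ 2 := by
      rw [hkx]; simp; ring
    have heq : ‖S x₀‖ = (Real.sqrt 3)⁻¹ * ‖x₀‖ := by
      have h1 : ‖S x₀‖ ^ 2 = ((Real.sqrt 3)⁻¹ * ‖x₀‖) ^ 2 := by
        rw [mul_pow, inv_pow, hsqrt3, hnx, hS2]; ring
      calc ‖S x₀‖ = Real.sqrt (‖S x₀‖ ^ 2) := (Real.sqrt_sq (norm_nonneg _)).symm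
        _ = Real.sqrt (((Real.sqrt 3)⁻¹ * ‖x₀‖) ^ 2) := by rw [h1]
        _ = (Real.sqrt 3)⁻¹ * ‖x₀‖ := Real.sqrt_sq (by positivity)
    have hx₀ne : ‖x₀‖ ≠ 0 := by
      simp only [norm_ne_zero_iff]
      intro h
      apply hv
      rw [← hx0, h]
      rfl
    have := S.ratio_le_opNorm x₀
    rw [heq, mul_div_assoc, div_self hx₀ne, mul_one] at this
    exact this
  exact le_antisymm hub hlb
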